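/- Kőnig's duality applied to the crossing graph: in the two-leaf update setting, the maximum number of horizontal edges that can be safely updated equals |H| minus the maximum matching of the bipartite crossing graph G'. -/

import Mathlib

/-- A directed simple cycle in the digraph given by relation `r`. -/
def IsCycle {V : Type*} (r : V → V → Prop) (l : List V) : Prop :=
  l ≠ [] ∧ l.Nodup ∧
    ∀ i : Fin l.length, r (l.get i) (l.get ⟨((i : ℕ) + 1) % l.length, Nat.mod_lt _ i.pos⟩)

/-- Chain-successor edges of two disjoint chains `C₁ = Fin m` and `C₂ = Fin k`. -/
def chainEdge {m k : ℕ} : Fin m ⊕ Fin k → Fin m ⊕ Fin k → Prop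
  | Sum.inl i, Sum.inl j => (i : ℕ) + 1 = (j : ℕ)
  | Sum.inr i, Sum.inr j => (i : ℕ) + 1 = (j : ℕ)
  | _, _ => False

/-- Two horizontal edges cross if the chain edges plus the two of them contain a
directed cycle. -/
def Crosses {m k : ℕ} (h₁ h₂ : (Fin m ⊕ Fin k) × (Fin m ⊕ Fin k)) : Prop :=
  ∃ l, IsCycle (fun a b => chainEdge a b ∨ (a, b) = h₁ ∨ (a, b) = h₂) l

/-- A set `S` of horizontal edges is safely updatable if the chain-successor
edges together with `S` form an acyclic digraph. -/
def Safe {m k : ℕ} (S : Finset ((Fin m ⊕ Fin k) × (Fin m ⊕ Fin k))) : Prop :=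
  ∀ l, ¬ IsCycle (fun a b => chainEdge a b ∨ (a, b) ∈ S) l

/-- A matching in the (bipartite) crossing graph on the horizontal edge set `H`:
a finite set of crossing pairs of edges of `H`, no two pairs sharing an
endpoint. -/
def IsCrossingMatching {m k : ℕ} (H : Finset ((Fin m ⊕ Fin k) × (Fin m ⊕ Fin k)))
    (M : Finset (((Fin m ⊕ Fin k) × (Fin m ⊕ Fin k)) ×
                 ((Fin m ⊕ Fin k) × (Fin m ⊕ Fin k)))) : Prop :=
  (∀ p ∈ M, p.1 ∈ H ∧ p.2 ∈ H ∧ p.1 ≠ p.2 ∧ Crosses p.1 p.2) ∧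
  (∀ p ∈ M, ∀ q ∈ M, p ≠ q →
    p.1 ≠ q.1 ∧ p.1 ≠ q.2 ∧ p.2 ≠ q.1 ∧ p.2 ≠ q.2)

/-! ### Auxiliary material -/

/-- The type of potential horizontal edges. -/
abbrev EE (m k : ℕ) := (Fin m ⊕ Fin k) × (Fin m ⊕ Fin k)

theorem isCycle_mono {V : Type*} {r r' : V → V → Prop} (h : ∀ a b, r a b → r' a b)
    {l : List V} (hc : IsCycle r l) : IsCycle r' l :=
  ⟨hc.1, hc.2.1, fun i => h _ _ (hc.2.2 i)⟩

/-- If a potential strictly increases along every edge then there is no cycle. -/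
theorem no_cycle_of_potential {V : Type*} {r : V → V → Prop} (φ : V → ℕ)
    (hφ : ∀ a b, r a b → φ a < φ b) (l : List V) : ¬ IsCycle r l := by
  rintro ⟨hne, -, hstep⟩
  have hn : 0 < l.length := List.length_pos_iff.mpr hne
  have key : ∀ i (h : i < l.length), φ (l.get ⟨0, hn⟩) ≤ φ (l.get ⟨i, h⟩) := by
    intro i
    induction i with
    | zero => intro h; exact le_refl _
    | succ j ih =>
      intro h
      have hj : j < l.length := Nat.lt_of_succ_lt h
      have hst := hφ _ _ (hstep ⟨j, hj⟩)
      have hm : (j + 1) % l.length = j + 1 := Nat.mod_eq_of_lt h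
      have hEq : (⟨(j + 1) % l.length, Nat.mod_lt _ hn⟩ : Fin l.length) = ⟨j + 1, h⟩ :=
        Fin.ext hm
      rw [hEq] at hst
      exact le_trans (ih hj) (le_of_lt hst)
  have hlt : l.length - 1 < l.length := by omega
  have hst := hφ _ _ (hstep ⟨l.length - 1, hlt⟩)
  have hm0 : (l.length - 1 + 1) % l.length = 0 := by
    have h1 : l.length - 1 + 1 = l.length := by omega
    rw [h1, Nat.mod_self]
  have hEq : (⟨(l.length - 1 + 1) % l.length, Nat.mod_lt _ hn⟩ : Fin l.length) = ⟨0, hn⟩ :=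
    Fin.ext hm0
  rw [hEq] at hst
  exact absurd (key _ hlt) (not_le.mpr hst)

/-- `IsCycle` for a list built from a function on `Fin n`. -/
theorem isCycle_ofFn {V : Type*} (r : V → V → Prop) {n : ℕ} (hn : 0 < n) (f : Fin n → V)
    (hinj : Function.Injective f)
    (hstep : ∀ i : Fin n, r (f i) (f ⟨((i : ℕ) + 1) % n, Nat.mod_lt _ hn⟩)) :
    IsCycle r (List.ofFn f) := by
  have hlen : (List.ofFn f).length = n := List.length_ofFn
  refine ⟨?_, List.nodup_ofFn.mpr hinj, ?_⟩
  · intro hnil; rw [hnil] at hlen; simp at hlen; omega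
  · intro i
    have h1 : (List.ofFn f).get i = f (Fin.cast hlen i) := List.get_ofFn f i
    have h2 : (List.ofFn f).get ⟨((i : ℕ) + 1) % (List.ofFn f).length, Nat.mod_lt _ i.pos⟩
        = f (Fin.cast hlen ⟨((i : ℕ) + 1) % (List.ofFn f).length, Nat.mod_lt _ i.pos⟩) :=
      List.get_ofFn f _
    rw [h1, h2]
    have h3 : (Fin.cast hlen ⟨((i : ℕ) + 1) % (List.ofFn f).length, Nat.mod_lt _ i.pos⟩)
        = ⟨(((Fin.cast hlen i : Fin n) : ℕ) + 1) % n, Nat.mod_lt _ hn⟩ := by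
      apply Fin.ext; simp [hlen]
    rw [h3]; exact hstep _

/-- The explicit crossing condition. -/
def CrossCond {m k : ℕ} (h g : EE m k) : Prop :=
  ∃ (a : Fin m) (b : Fin k) (c : Fin k) (d : Fin m),
    h = (Sum.inl a, Sum.inr b) ∧ g = (Sum.inr c, Sum.inl d) ∧ (b : ℕ) ≤ c ∧ (d : ℕ) ≤ a

theorem crosses_of_crossCond {m k : ℕ} {h g : EE m k}
    (hc : CrossCond h g) : Crosses h g := by
  obtain ⟨a, b, c, d, rfl, rfl, hbc, hda⟩ := hc
  have ham := a.isLt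
  have hck := c.isLt
  set n₁ : ℕ := (a : ℕ) + 1 - d with hn₁
  set n₂ : ℕ := (c : ℕ) + 1 - b with hn₂
  have hn₁pos : 0 < n₁ := by omega
  have hn₂pos : 0 < n₂ := by omega
  set f : Fin (n₁ + n₂) → Fin m ⊕ Fin k := fun i =>
    if hi : (i : ℕ) < n₁ then Sum.inl (⟨(d : ℕ) + i, by omega⟩ : Fin m)
    else Sum.inr (⟨(b : ℕ) + ((i : ℕ) - n₁), by have := i.isLt; omega⟩ : Fin k) with hfdef
  have hfl : ∀ (t : ℕ) (ht : t < n₁ + n₂) (h : t < n₁),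
      f ⟨t, ht⟩ = Sum.inl (⟨(d : ℕ) + t, by omega⟩ : Fin m) := by
    intro t ht h
    simp only [hfdef]
    rw [dif_pos h]
  have hfr : ∀ (t : ℕ) (ht : t < n₁ + n₂) (h : ¬ t < n₁),
      f ⟨t, ht⟩ = Sum.inr (⟨(b : ℕ) + (t - n₁), by omega⟩ : Fin k) := by
    intro t ht h
    simp only [hfdef]
    rw [dif_neg h]
  refine ⟨List.ofFn f, isCycle_ofFn _ (by omega) f ?_ ?_⟩
  · rintro ⟨iv, hiv⟩ ⟨jv, hjv⟩ hij
    by_cases hi : iv < n₁ <;> by_cases hj : jv < n₁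
    · rw [hfl iv hiv hi, hfl jv hjv hj] at hij
      simp only [Sum.inl.injEq, Fin.mk.injEq] at hij
      exact Fin.mk_eq_mk.mpr (by omega)
    · rw [hfl iv hiv hi, hfr jv hjv hj] at hij
      simp at hij
    · rw [hfr iv hiv hi, hfl jv hjv hj] at hij
      simp at hij
    · rw [hfr iv hiv hi, hfr jv hjv hj] at hij
      simp only [Sum.inr.injEq, Fin.mk.injEq] at hij
      exact Fin.mk_eq_mk.mpr (by omega)
  · rintro ⟨iv, hiv⟩
    simp only [Fin.val_mk]
    rcases Nat.lt_trichotomy (iv + 1) n₁ with hlt | heq | hgt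
    · have hmod : (iv + 1) % (n₁ + n₂) = iv + 1 := Nat.mod_eq_of_lt (by omega)
      simp only [hmod]
      rw [hfl iv hiv (by omega), hfl (iv + 1) (by omega) hlt]
      left
      show ((d : ℕ) + iv) + 1 = (d : ℕ) + (iv + 1)
      omega
    · have hmod : (iv + 1) % (n₁ + n₂) = iv + 1 := Nat.mod_eq_of_lt (by omega)
      simp only [hmod]
      rw [hfl iv hiv (by omega), hfr (iv + 1) (by omega) (by omega)]
      right; left
      simp only [Prod.mk.injEq, Sum.inl.injEq, Sum.inr.injEq]
      exact ⟨Fin.ext (by simp; omega), Fin.ext (by simp; omega)⟩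
    · rcases Nat.lt_or_ge (iv + 1) (n₁ + n₂) with hlt2 | hge2
      · have hmod : (iv + 1) % (n₁ + n₂) = iv + 1 := Nat.mod_eq_of_lt hlt2
        simp only [hmod]
        rw [hfr iv hiv (by omega), hfr (iv + 1) (by omega) (by omega)]
        left
        show ((b : ℕ) + (iv - n₁)) + 1 = (b : ℕ) + ((iv + 1) - n₁)
        omega
      · have hieq : iv + 1 = n₁ + n₂ := by omega
        have hmod : (iv + 1) % (n₁ + n₂) = 0 := by rw [hieq, Nat.mod_self]
        simp only [hmod]
        rw [hfr iv hiv (by omega), hfl 0 (by omega) (by omega)]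
        right; right
        simp only [Prod.mk.injEq, Sum.inl.injEq, Sum.inr.injEq]
        exact ⟨Fin.ext (by simp; omega), Fin.ext (by simp)⟩

/-- The threshold function used to build the topological order. -/
noncomputable def pfun {m k : ℕ} (S : Finset (EE m k)) (j : ℕ) : ℕ :=
  S.sup (fun e => match e with
    | (Sum.inl a, Sum.inr b) => if (b : ℕ) ≤ j then (a : ℕ) + 1 else 0
    | _ => 0)

theorem pfun_mono {m k : ℕ} (S : Finset (EE m k))
    {j j' : ℕ} (hjj : j ≤ j') : pfun S j ≤ pfun S j' := by
  apply Finset.sup_mono_fun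
  rintro ⟨x, y⟩ -
  rcases x with a | a <;> rcases y with b | b
  · exact le_refl _
  · show (if (b : ℕ) ≤ j then (a : ℕ) + 1 else 0) ≤ (if (b : ℕ) ≤ j' then (a : ℕ) + 1 else 0)
    by_cases hbj : (b : ℕ) ≤ j
    · rw [if_pos hbj, if_pos (le_trans hbj hjj)]
    · rw [if_neg hbj]; exact Nat.zero_le _
  · exact le_refl _
  · exact le_refl _

theorem pfun_ge {m k : ℕ} {S : Finset (EE m k)}
    {a : Fin m} {b : Fin k} (hmem : (Sum.inl a, Sum.inr b) ∈ S) {j : ℕ} (hbj : (b : ℕ) ≤ j) :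
    (a : ℕ) + 1 ≤ pfun S j := by
  have h := Finset.le_sup (f := fun e : EE m k => match e with
    | (Sum.inl a, Sum.inr b) => if (b : ℕ) ≤ j then (a : ℕ) + 1 else 0
    | _ => 0) hmem
  refine le_trans (le_of_eq ?_) h
  show (a : ℕ) + 1 = (if (b : ℕ) ≤ j then (a : ℕ) + 1 else 0)
  rw [if_pos hbj]

/-- The potential function. -/
noncomputable def phi {m k : ℕ} (S : Finset (EE m k)) : Fin m ⊕ Fin k → ℕ
  | Sum.inl i => (i : ℕ) + ((Finset.range k).filter (fun j => pfun S j ≤ (i : ℕ))).card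
  | Sum.inr j => (j : ℕ) + pfun S (j : ℕ)

theorem safe_of_indep {m k : ℕ} {S : Finset (EE m k)}
    (hdir : ∀ e ∈ S, (∃ a b, e = (Sum.inl a, Sum.inr b)) ∨ (∃ c d, e = (Sum.inr c, Sum.inl d)))
    (hind : ∀ h ∈ S, ∀ g ∈ S, ¬ CrossCond h g) : Safe S := by
  intro l
  apply no_cycle_of_potential (phi S)
  rintro x y (hc | hmem)
  · rcases x with i | i <;> rcases y with i' | i'
    · have hc' : (i : ℕ) + 1 = (i' : ℕ) := hc
      have hmono : ((Finset.range k).filter (fun j => pfun S j ≤ (i : ℕ))).card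
          ≤ ((Finset.range k).filter (fun j => pfun S j ≤ (i' : ℕ))).card := by
        apply Finset.card_le_card
        intro j hj
        simp only [Finset.mem_filter] at hj ⊢
        exact ⟨hj.1, by omega⟩
      simp only [phi]; omega
    · exact absurd hc not_false
    · exact absurd hc not_false
    · have hc' : (i : ℕ) + 1 = (i' : ℕ) := hc
      have hmono : pfun S (i : ℕ) ≤ pfun S (i' : ℕ) := pfun_mono S (by omega)
      simp only [phi]; omega
  · rcases hdir _ hmem with ⟨a, b, he⟩ | ⟨c, d, he⟩
    · injection he with he1 he2
      subst he1; subst he2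
      -- left-to-right edge (inl a, inr b)
      have h1 : (a : ℕ) + 1 ≤ pfun S (b : ℕ) := pfun_ge hmem le_rfl
      have h2 : ((Finset.range k).filter (fun j => pfun S j ≤ (a : ℕ))).card ≤ (b : ℕ) := by
        have hsub : (Finset.range k).filter (fun j => pfun S j ≤ (a : ℕ)) ⊆
            Finset.range (b : ℕ) := by
          intro j hj
          simp only [Finset.mem_filter, Finset.mem_range] at hj ⊢
          by_contra hge
          have : pfun S (b : ℕ) ≤ pfun S j := pfun_mono S (by omega)
          omega
        simpa using Finset.card_le_card hsub
      simp only [phi]; omega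
    · injection he with he1 he2
      subst he1; subst he2
      -- right-to-left edge (inr c, inl d)
      have h1 : pfun S (c : ℕ) ≤ (d : ℕ) := by
        apply Finset.sup_le
        rintro ⟨x, y⟩ he
        rcases x with a | a <;> rcases y with b | b
        · exact Nat.zero_le _
        · show (if (b : ℕ) ≤ c then (a : ℕ) + 1 else 0) ≤ (d : ℕ)
          by_cases hbc : (b : ℕ) ≤ c
          · rw [if_pos hbc]
            by_contra hlt
            exact hind _ he _ hmem ⟨a, b, c, d, rfl, rfl, hbc, by omega⟩
          · rw [if_neg hbc]; exact Nat.zero_le _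
        · exact Nat.zero_le _
        · exact Nat.zero_le _
      have h2 : (c : ℕ) + 1 ≤ ((Finset.range k).filter (fun j => pfun S j ≤ (d : ℕ))).card := by
        have hsub : Finset.range ((c : ℕ) + 1) ⊆
            (Finset.range k).filter (fun j => pfun S j ≤ (d : ℕ)) := by
          intro j hj
          simp only [Finset.mem_range] at hj
          simp only [Finset.mem_filter, Finset.mem_range]
          have hck := c.isLt
          exact ⟨by omega, le_trans (pfun_mono S (by omega)) h1⟩
        simpa using Finset.card_le_card hsub
      simp only [phi]; omega

/-- Shapes of edges of `H`. -/
theorem shape_of_mem {m k : ℕ} {H : Finset (EE m k)}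
    (hH : ∀ e ∈ H, (e.1.isLeft = true ∧ e.2.isRight = true) ∨
                   (e.1.isRight = true ∧ e.2.isLeft = true))
    {e : EE m k} (he : e ∈ H) :
    (∃ a b, e = (Sum.inl a, Sum.inr b)) ∨ (∃ c d, e = (Sum.inr c, Sum.inl d)) := by
  obtain ⟨x, y⟩ := e
  rcases x with a | a <;> rcases y with b | b
  · exfalso; rcases hH _ he with ⟨h1, h2⟩ | ⟨h1, h2⟩ <;> simp_all
  · exact Or.inl ⟨a, b, rfl⟩
  · exact Or.inr ⟨a, b, rfl⟩
  · exfalso; rcases hH _ he with ⟨h1, h2⟩ | ⟨h1, h2⟩ <;> simp_all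

/-! ### Main theorem -/

theorem max_safe_eq_card_sub_max_matching (m k : ℕ)
    (H : Finset ((Fin m ⊕ Fin k) × (Fin m ⊕ Fin k)))
    (hH : ∀ e ∈ H, (e.1.isLeft = true ∧ e.2.isRight = true) ∨
                   (e.1.isRight = true ∧ e.2.isLeft = true)) :
    sSup {n : ℕ | ∃ S ⊆ H, Safe S ∧ S.card = n} =
      H.card - sSup {n : ℕ | ∃ M, IsCrossingMatching H M ∧ M.card = n} := by
  classical
  have hLmem : (0 : ℕ) ∈ {n : ℕ | ∃ S ⊆ H, Safe S ∧ S.card = n} := by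
    refine ⟨∅, Finset.empty_subset _, safe_of_indep (by simp) (by simp), by simp⟩
  have hLbdd : BddAbove {n : ℕ | ∃ S ⊆ H, Safe S ∧ S.card = n} := by
    refine ⟨H.card, ?_⟩
    rintro n ⟨S, hS, -, rfl⟩
    exact Finset.card_le_card hS
  have hRmem : (0 : ℕ) ∈ {n : ℕ | ∃ M, IsCrossingMatching H M ∧ M.card = n} := by
    refine ⟨∅, ⟨by simp, by simp⟩, by simp⟩
  have hRbdd : BddAbove {n : ℕ | ∃ M, IsCrossingMatching H M ∧ M.card = n} := by
    refine ⟨(H ×ˢ H).card, ?_⟩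
    rintro n ⟨M, hM, rfl⟩
    apply Finset.card_le_card
    intro p hp
    rw [Finset.mem_product]
    exact ⟨(hM.1 p hp).1, (hM.1 p hp).2.1⟩
  set ν := sSup {n : ℕ | ∃ M, IsCrossingMatching H M ∧ M.card = n} with hν
  have safe_indep : ∀ S : Finset (EE m k), Safe S → ∀ p ∈ S, ∀ q ∈ S, ¬ Crosses p q := by
    rintro S hsafe p hp q hq ⟨l, hl⟩
    refine hsafe l (isCycle_mono ?_ hl)
    rintro a b (h | h | h)
    · exact Or.inl h
    · exact Or.inr (by rw [h]; exact hp)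
    · exact Or.inr (by rw [h]; exact hq)
  -- Direction ≤ : any safe set has at most |H| - ν elements
  have hle : sSup {n : ℕ | ∃ S ⊆ H, Safe S ∧ S.card = n} ≤ H.card - ν := by
    obtain ⟨M₀, hM₀, hM₀card⟩ := Nat.sSup_mem ⟨0, hRmem⟩ hRbdd
    apply csSup_le ⟨0, hLmem⟩
    rintro n ⟨S, hS, hsafe, rfl⟩
    have hinj : ∀ p ∈ M₀, (if p.1 ∈ S then p.2 else p.1) ∈ H \ S := by
      intro p hp
      obtain ⟨h1, h2, -, h4⟩ := hM₀.1 p hp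
      by_cases hcase : p.1 ∈ S
      · rw [if_pos hcase, Finset.mem_sdiff]
        exact ⟨h2, fun h5 => safe_indep S hsafe _ hcase _ h5 h4⟩
      · rw [if_neg hcase]
        exact Finset.mem_sdiff.mpr ⟨h1, hcase⟩
    have hcard : M₀.card ≤ (H \ S).card := by
      apply Finset.card_le_card_of_injOn _ hinj
      intro p hp q hq hpq
      by_contra hne
      obtain ⟨e1, e2, e3, e4⟩ := hM₀.2 p hp q hq hne
      by_cases hc1 : p.1 ∈ S <;> by_cases hc2 : q.1 ∈ S <;>
        simp only [hc1, hc2, if_pos, if_neg, not_false_iff, if_true, if_false] at hpq <;> tauto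
    have h1 : S.card ≤ H.card := Finset.card_le_card hS
    have h2 : (H \ S).card = H.card - S.card := Finset.card_sdiff_of_subset hS
    have h3 : ν = M₀.card := hM₀card.symm
    omega
  -- Direction ≥ : construct a large safe set via Hall's theorem
  have hge : H.card - ν ≤ sSup {n : ℕ | ∃ S ⊆ H, Safe S ∧ S.card = n} := by
    set H₁ := H.filter (fun e : EE m k => ∃ a b, e = (Sum.inl a, Sum.inr b)) with hH₁
    set H₂ := H.filter (fun e : EE m k => ∃ c d, e = (Sum.inr c, Sum.inl d)) with hH₂
    have hdisj : Disjoint H₁ H₂ := by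
      rw [Finset.disjoint_left]
      rintro e he1 he2
      rw [hH₁, Finset.mem_filter] at he1
      rw [hH₂, Finset.mem_filter] at he2
      obtain ⟨a, b, rfl⟩ := he1.2
      obtain ⟨c, d, he⟩ := he2.2
      simp at he
    have hunion : H = H₁ ∪ H₂ := by
      apply Finset.Subset.antisymm
      · intro e he
        rcases shape_of_mem hH he with h | h
        · exact Finset.mem_union_left _ (Finset.mem_filter.mpr ⟨he, h⟩)
        · exact Finset.mem_union_right _ (Finset.mem_filter.mpr ⟨he, h⟩)
      · exact Finset.union_subset (Finset.filter_subset _ _) (Finset.filter_subset _ _)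
    have hHcard : H.card = H₁.card + H₂.card := by
      rw [hunion]; exact Finset.card_union_of_disjoint hdisj
    set N : Finset (EE m k) → Finset (EE m k) :=
      fun A => H₂.filter (fun g => ∃ h ∈ A, CrossCond h g) with hN
    set d := H₁.powerset.sup (fun A => A.card - (N A).card) with hd
    obtain ⟨A₀, hA₀sub, hA₀card⟩ :
        ∃ A₀, A₀ ⊆ H₁ ∧ A₀.card = (N A₀).card + d := by
      by_cases hd0 : d = 0
      · refine ⟨∅, Finset.empty_subset _, ?_⟩
        have hN0 : N ∅ = ∅ := by rw [hN]; simp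
        rw [hN0, hd0]; simp
      · obtain ⟨A₀, hmem, hval⟩ := Finset.exists_mem_eq_sup H₁.powerset
          ⟨∅, Finset.empty_mem_powerset _⟩ (fun A => A.card - (N A).card)
        rw [← hd] at hval
        refine ⟨A₀, Finset.mem_powerset.mp hmem, by omega⟩
    set t : {x // x ∈ H₁} → Finset (EE m k ⊕ Fin d) := fun x =>
      ((N {x.val}).image Sum.inl) ∪ (Finset.univ.image Sum.inr) with ht
    have hall : ∀ s : Finset {x // x ∈ H₁}, s.card ≤ (s.biUnion t).card := by
      intro s
      rcases s.eq_empty_or_nonempty with rfl | ⟨x₀, hx₀⟩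
      · simp
      set A := s.image Subtype.val with hA
      have hAsub : A ⊆ H₁ := by
        intro e he
        rw [hA, Finset.mem_image] at he
        obtain ⟨x, -, rfl⟩ := he
        exact x.2
      have hsub : ((N A).image Sum.inl ∪ (Finset.univ : Finset (Fin d)).image Sum.inr)
          ⊆ s.biUnion t := by
        intro z hz
        rw [Finset.mem_union] at hz
        rcases hz with hz | hz
        · rw [Finset.mem_image] at hz
          obtain ⟨g, hg, rfl⟩ := hz
          rw [hN, Finset.mem_filter] at hg
          obtain ⟨hg2, h, hhA, hcross⟩ := hg
          rw [hA, Finset.mem_image] at hhA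
          obtain ⟨x, hx, rfl⟩ := hhA
          apply Finset.mem_biUnion.mpr ⟨x, hx, ?_⟩
          rw [ht]
          apply Finset.mem_union_left
          rw [Finset.mem_image]
          refine ⟨g, ?_, rfl⟩
          rw [hN, Finset.mem_filter]
          exact ⟨hg2, x.val, Finset.mem_singleton_self _, hcross⟩
        · exact Finset.mem_biUnion.mpr ⟨x₀, hx₀, Finset.mem_union_right _ hz⟩
      have hdisj2 : Disjoint ((N A).image Sum.inl)
          ((Finset.univ : Finset (Fin d)).image Sum.inr) := by
        rw [Finset.disjoint_left]
        rintro z hz1 hz2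
        rw [Finset.mem_image] at hz1 hz2
        obtain ⟨g, -, rfl⟩ := hz1
        obtain ⟨j, -, hj⟩ := hz2
        simp at hj
      have hcards : ((N A).image Sum.inl ∪ (Finset.univ : Finset (Fin d)).image Sum.inr).card
          = (N A).card + d := by
        rw [Finset.card_union_of_disjoint hdisj2,
          Finset.card_image_of_injective _ Sum.inl_injective,
          Finset.card_image_of_injective _ Sum.inr_injective]
        simp
      have hdef : A.card ≤ (N A).card + d := by
        have hds : A.card - (N A).card ≤ d := by
          rw [hd]
          exact Finset.le_sup (f := fun A => A.card - (N A).card)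
            (Finset.mem_powerset.mpr hAsub)
        omega
      have hscard : s.card = A.card :=
        (Finset.card_image_of_injective _ Subtype.val_injective).symm
      calc s.card = A.card := hscard
        _ ≤ (N A).card + d := hdef
        _ = ((N A).image Sum.inl ∪ (Finset.univ : Finset (Fin d)).image Sum.inr).card :=
            hcards.symm
        _ ≤ (s.biUnion t).card := Finset.card_le_card hsub
    obtain ⟨f, hfinj, hf⟩ := (Finset.all_card_le_biUnion_card_iff_exists_injective t).mp hall
    set P := Finset.univ.filter (fun x : {x // x ∈ H₁} => ∃ g : EE m k, f x = Sum.inl g) with hP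
    set g₀ : {x // x ∈ H₁} → EE m k := fun x => Sum.elim id (fun _ => x.val) (f x) with hg₀
    have hg₀spec : ∀ x ∈ P, f x = Sum.inl (g₀ x) ∧ g₀ x ∈ N {x.val} := by
      intro x hx
      rw [hP, Finset.mem_filter] at hx
      obtain ⟨-, g, hg⟩ := hx
      have h1 : g₀ x = g := by simp only [hg₀]; rw [hg]; rfl
      refine ⟨by rw [h1, hg], ?_⟩
      have hfx := hf x
      rw [ht, hg, Finset.mem_union] at hfx
      rcases hfx with hcase | hcase
      · rw [Finset.mem_image] at hcase
        obtain ⟨g', hg', hgg⟩ := hcase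
        rw [Sum.inl.injEq] at hgg
        rw [h1, ← hgg]; exact hg'
      · rw [Finset.mem_image] at hcase
        obtain ⟨j, -, hj⟩ := hcase
        simp at hj
    have hNmem : ∀ (x g : EE m k), g ∈ N {x} → g ∈ H₂ ∧ CrossCond x g := by
      intro x g hg
      rw [hN, Finset.mem_filter] at hg
      obtain ⟨h1, h, hh, hcross⟩ := hg
      rw [Finset.mem_singleton] at hh
      exact ⟨h1, hh ▸ hcross⟩
    set M : Finset (EE m k × EE m k) := P.image (fun x => (x.val, g₀ x)) with hM
    have hMmatching : IsCrossingMatching H M := by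
      constructor
      · intro p hp
        rw [hM, Finset.mem_image] at hp
        obtain ⟨x, hx, rfl⟩ := hp
        obtain ⟨-, hg⟩ := hg₀spec x hx
        obtain ⟨hg2, hcross⟩ := hNmem _ _ hg
        obtain ⟨a, b, c, d', he1, he2, -, -⟩ := hcross
        refine ⟨Finset.mem_of_mem_filter _ x.2, Finset.mem_of_mem_filter _ hg2, ?_,
          crosses_of_crossCond (hNmem _ _ hg).2⟩
        rw [he1, he2]
        simp
      · intro p hp q hq hpq
        rw [hM, Finset.mem_image] at hp hq
        obtain ⟨x, hx, rfl⟩ := hp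
        obtain ⟨y, hy, rfl⟩ := hq
        have hxy : x ≠ y := fun h => hpq (by rw [h])
        have hxyval : x.val ≠ y.val := fun h => hxy (Subtype.ext h)
        obtain ⟨hfx, hgx⟩ := hg₀spec x hx
        obtain ⟨hfy, hgy⟩ := hg₀spec y hy
        have hgg : g₀ x ≠ g₀ y := by
          intro h
          apply hxy
          apply hfinj
          rw [hfx, hfy, h]
        have hshape : ∀ (z w : {x // x ∈ H₁}), w ∈ P → z.val ≠ g₀ w := by
          intro z w hw h
          obtain ⟨a, b, hz⟩ := (Finset.mem_filter.mp z.2).2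
          obtain ⟨a', b', c', d', -, hgw, -, -⟩ := (hNmem _ _ (hg₀spec w hw).2).2
          rw [hz, hgw] at h
          simp at h
        exact ⟨hxyval, hshape x y hy, fun h => hshape y x hx h.symm, hgg⟩
    have hMcard : M.card = P.card := by
      simp only [hM]
      apply Finset.card_image_of_injOn
      intro x _ y _ hxy
      exact Subtype.ext (congrArg Prod.fst hxy)
    have hPcard : H₁.card ≤ P.card + d := by
      set Q := Finset.univ.filter
        (fun x : {x // x ∈ H₁} => ¬ ∃ g : EE m k, f x = Sum.inl g) with hQ
      have hQcard : Q.card ≤ d := by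
        have hQsub : Q.image f ⊆ (Finset.univ : Finset (Fin d)).image Sum.inr := by
          intro z hz
          rw [Finset.mem_image] at hz
          obtain ⟨x, hx, rfl⟩ := hz
          rw [hQ, Finset.mem_filter] at hx
          rcases hfx : f x with g | j
          · exact absurd ⟨g, hfx⟩ hx.2
          · rw [Finset.mem_image]; exact ⟨j, Finset.mem_univ _, rfl⟩
        have h1 : (Q.image f).card = Q.card := Finset.card_image_of_injective _ hfinj
        have h2 := Finset.card_le_card hQsub
        rw [h1, Finset.card_image_of_injective _ Sum.inr_injective] at h2
        simpa using h2
      have hPQ : P.card + Q.card = Fintype.card {x // x ∈ H₁} := by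
        rw [hP, hQ, Finset.card_filter_add_card_filter_not]
        exact Finset.card_univ
      rw [Fintype.card_coe] at hPQ
      omega
    have hνge : M.card ≤ ν := le_csSup hRbdd ⟨M, hMmatching, rfl⟩
    set I := A₀ ∪ (H₂ \ N A₀) with hI
    have hIsub : I ⊆ H := by
      rw [hI]
      apply Finset.union_subset
      · exact le_trans hA₀sub (Finset.filter_subset _ _)
      · exact le_trans (Finset.sdiff_subset) (Finset.filter_subset _ _)
    have hIsafe : Safe I := by
      apply safe_of_indep
      · intro e he
        exact shape_of_mem hH (hIsub he)
      · intro p hp q hq hcross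
        obtain ⟨a, b, c, d', hp1, hq1, hbc, hda⟩ := hcross
        rw [hI, Finset.mem_union] at hp hq
        have hpA : p ∈ A₀ := by
          rcases hp with h | h
          · exact h
          · exfalso
            obtain ⟨c', d'', he⟩ := (Finset.mem_filter.mp (Finset.mem_sdiff.mp h).1).2
            rw [hp1] at he
            simp at he
        have hqN : q ∈ H₂ \ N A₀ := by
          rcases hq with h | h
          · exfalso
            obtain ⟨a', b', he⟩ := (Finset.mem_filter.mp (hA₀sub h)).2
            rw [hq1] at he
            simp at he
          · exact h
        rw [Finset.mem_sdiff] at hqN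
        apply hqN.2
        rw [hN, Finset.mem_filter]
        exact ⟨hqN.1, p, hpA, a, b, c, d', hp1, hq1, hbc, hda⟩
    have hIdisj : Disjoint A₀ (H₂ \ N A₀) := by
      rw [Finset.disjoint_left]
      intro e he1 he2
      obtain ⟨a, b, he⟩ := (Finset.mem_filter.mp (hA₀sub he1)).2
      obtain ⟨c, d', he'⟩ := (Finset.mem_filter.mp (Finset.mem_sdiff.mp he2).1).2
      rw [he] at he'
      simp at he'
    have hNsub : N A₀ ⊆ H₂ := by rw [hN]; exact Finset.filter_subset _ _
    have hIcard : I.card = A₀.card + (H₂.card - (N A₀).card) := by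
      rw [hI, Finset.card_union_of_disjoint hIdisj, Finset.card_sdiff_of_subset hNsub]
    have hNcard : (N A₀).card ≤ H₂.card := Finset.card_le_card hNsub
    have hle2 : I.card ≤ sSup {n : ℕ | ∃ S ⊆ H, Safe S ∧ S.card = n} :=
      le_csSup hLbdd ⟨I, hIsub, hIsafe, rfl⟩
    omega
  omega
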